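/- There exist two graphs G₁, G₂ on n ≥ 2 nodes with identical node features x₁,…,xₙ ∈ ℝᵈ, a weight vector w₁ ∈ ℝᵈ with w₂ = r·w₁ (r > 0), and a graph-less teacher f*(X) = sign(w₁·Σᵢ xᵢ), such that f* gives the same label to both graphs but the GNN f(X,A) = w₁·Σᵢxᵢ + w₂·Σᵢ deg(i)xᵢ assigns them outputs of opposite sign. -/

import Mathlib

open Matrix BigOperators Finset

def myG : SimpleGraph (Fin 3) where
  Adj i j := i ≠ j ∧ i ≠ 2 ∧ j ≠ 2
  symm := by constructor; intro i j h; exact ⟨h.1.symm, h.2.2, h.2.1⟩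
  loopless := by constructor; intro i h; exact h.1 rfl

instance : DecidableRel myG.Adj := fun i j => by
  unfold myG; simp only []; infer_instance

lemma myG_deg0 {inst : Fintype (myG.neighborSet 0)} :
    @SimpleGraph.degree _ myG 0 inst = 1 := by
  rw [Subsingleton.elim inst (myG.neighborSetFintype 0)]; decide
lemma myG_deg1 {inst : Fintype (myG.neighborSet 1)} :
    @SimpleGraph.degree _ myG 1 inst = 1 := by
  rw [Subsingleton.elim inst (myG.neighborSetFintype 1)]; decide
lemma myG_deg2 {inst : Fintype (myG.neighborSet 2)} :
    @SimpleGraph.degree _ myG 2 inst = 0 := by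
  rw [Subsingleton.elim inst (myG.neighborSetFintype 2)]; decide
lemma bot_deg (i : Fin 3) {inst : Fintype ((⊥ : SimpleGraph (Fin 3)).neighborSet i)} :
    @SimpleGraph.degree _ ⊥ i inst = 0 := by
  rw [Subsingleton.elim inst ((⊥ : SimpleGraph (Fin 3)).neighborSetFintype i)]
  exact SimpleGraph.bot_degree i

open scoped Classical in
/-- Failure of extrapolation: two graphs with identical node features, hence the
same graph-less teacher label, on which the aligned GNN outputs have opposite
(nonzero) signs. -/
theorem extrapolation_failure_exists :
    ∃ (n d : ℕ) (x : Fin n → Fin d → ℝ) (w₁ : Fin d → ℝ) (r : ℝ)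
      (G₁ G₂ : SimpleGraph (Fin n)),
      2 ≤ n ∧ 0 < r ∧
      Real.sign (w₁ ⬝ᵥ ∑ i, x i) ≠ 0 ∧
      Real.sign (w₁ ⬝ᵥ (∑ i, x i) + (r • w₁) ⬝ᵥ ∑ i, (G₁.degree i : ℝ) • x i) =
        - Real.sign (w₁ ⬝ᵥ (∑ i, x i) + (r • w₁) ⬝ᵥ ∑ i, (G₂.degree i : ℝ) • x i) ∧
      Real.sign (w₁ ⬝ᵥ (∑ i, x i) + (r • w₁) ⬝ᵥ ∑ i, (G₁.degree i : ℝ) • x i) ≠ 0 := by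
  refine ⟨3, 1, fun i _ => ![(1:ℝ), 1, -3] i, fun _ => 1, 1, myG, ⊥, by norm_num, by norm_num,
    ?_, ?_, ?_⟩ <;>
  · simp only [Fin.sum_univ_three, myG_deg0, myG_deg1, myG_deg2, bot_deg,
      dotProduct, Fin.sum_univ_one, Matrix.cons_val_zero, Matrix.cons_val_one, Matrix.cons_val_two,
      Matrix.head_cons, Pi.smul_apply, smul_eq_mul]
    norm_num
    all_goals
      first
      | (rw [show (-1:ℝ) + 2 = 1 by norm_num, Real.sign_one]
         norm_num [Real.sign_of_neg])
      | norm_num [Real.sign_of_neg]
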